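/- Let R > 0 and k ∈ ℤ. Let θ : (0,R] → ℝ be continuous and differentiable on (0,R), and suppose that ∫₀^R θ(r)²·r dr < ∞, ∫₀^R θ′(r)²·r dr < ∞, and ∫₀^R (θ(r) − kπ)²/r dr < ∞. Then θ(r) → kπ as r → 0⁺; in particular θ extends to a continuous function on [0,R] with value kπ at r = 0. -/

import Mathlib

open MeasureTheory Set Filter Real Topology

/-- **Value at the origin is a multiple of π** (paper's Lemma 4.4).
If `θ : (0,R] → ℝ` is continuous, differentiable on `(0,R)`, and the weighted integrals
`∫₀^R θ² r dr`, `∫₀^R θ′² r dr`, `∫₀^R (θ - kπ)²/r dr` are finite, then `θ(r) → kπ` as `r → 0⁺`,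
and `θ` extends continuously to `[0,R]` with value `kπ` at `0`. -/
theorem value_at_origin_is_multiple_of_pi
    (R : ℝ) (hR : 0 < R) (k : ℤ) (θ : ℝ → ℝ)
    (hcont : ContinuousOn θ (Ioc 0 R))
    (hdiff : ∀ r ∈ Ioo (0:ℝ) R, DifferentiableAt ℝ θ r)
    (h1 : IntegrableOn (fun r => θ r ^ 2 * r) (Ioo 0 R))
    (h2 : IntegrableOn (fun r => deriv θ r ^ 2 * r) (Ioo 0 R))
    (h3 : IntegrableOn (fun r => (θ r - (k : ℝ) * π) ^ 2 / r) (Ioo 0 R)) :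
    Tendsto θ (nhdsWithin 0 (Ioi 0)) (nhds ((k : ℝ) * π)) ∧
      ∃ Θ : ℝ → ℝ, ContinuousOn Θ (Icc 0 R) ∧ Θ 0 = (k : ℝ) * π ∧
        ∀ r ∈ Ioc (0:ℝ) R, Θ r = θ r := by
  set c : ℝ := (k : ℝ) * π with hc
  set b : ℝ := R / 2 with hbdef
  have hb0 : (0:ℝ) < b := by positivity
  have hbR : b < R := by rw [hbdef]; linarith
  set φ : ℝ → ℝ := fun r => 2 * (θ r - c) * deriv θ r with hφ
  -- measurability of φ on (0,R)
  have hfc : ContinuousOn (fun r => θ r - c) (Ioc 0 R) := hcont.sub continuousOn_const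
  have hfm : AEStronglyMeasurable (fun r => θ r - c) (volume.restrict (Ioo 0 R)) :=
    ((hfc.mono Ioo_subset_Ioc_self).aestronglyMeasurable measurableSet_Ioo)
  have hdm : AEStronglyMeasurable (deriv θ) (volume.restrict (Ioo 0 R)) :=
    (measurable_deriv θ).aestronglyMeasurable
  have hφm : AEStronglyMeasurable φ (volume.restrict (Ioo 0 R)) :=
    (hfm.const_mul 2).mul hdm
  -- dominating function
  have hh : IntegrableOn (fun r => (θ r - c) ^ 2 / r + deriv θ r ^ 2 * r) (Ioo 0 R) :=
    h3.add h2
  have hbound : ∀ x ∈ Ioo (0:ℝ) R, ‖φ x‖ ≤ (θ x - c) ^ 2 / x + deriv θ x ^ 2 * x := by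
    intro x hx
    have hx0 : 0 < x := hx.1
    set s : ℝ := Real.sqrt x with hs
    have hs0 : 0 < s := Real.sqrt_pos.2 hx0
    have hss : s ^ 2 = x := Real.sq_sqrt hx0.le
    set A : ℝ := (θ x - c) / s with hA
    set B : ℝ := deriv θ x * s with hB
    have e1 : (θ x - c) ^ 2 / x = A ^ 2 := by
      rw [hA, div_pow, hss]
    have e2 : deriv θ x ^ 2 * x = B ^ 2 := by
      rw [hB, mul_pow, hss]
    have e3 : φ x = 2 * A * B := by
      rw [hφ, hA, hB]
      field_simp
    rw [e1, e2, e3, Real.norm_eq_abs, abs_le]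
    constructor
    · nlinarith [sq_nonneg (A + B)]
    · nlinarith [sq_nonneg (A - B)]
  have hφint : IntegrableOn φ (Ioo 0 R) := by
    apply hh.mono' hφm
    filter_upwards [ae_restrict_mem measurableSet_Ioo] with x hx
    exact hbound x hx
  -- tail integral tends to zero
  have htail0 : Tendsto (fun a => ∫ x in Ioc 0 a, φ x ∂(volume.restrict (Ioo 0 R)))
      (𝓝[>] (0:ℝ)) (𝓝 0) := by
    apply hφint.tendsto_setIntegral_nhds_zero
    have hle : ∀ a : ℝ, (volume.restrict (Ioo 0 R)) (Ioc 0 a) ≤ ENNReal.ofReal a := by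
      intro a
      rw [Measure.restrict_apply measurableSet_Ioc]
      calc volume (Ioc 0 a ∩ Ioo 0 R) ≤ volume (Ioc 0 a) :=
            measure_mono inter_subset_left
        _ = ENNReal.ofReal a := by rw [Real.volume_Ioc, sub_zero]
    have hida : Tendsto (fun a : ℝ => a) (𝓝[>] (0:ℝ)) (𝓝 0) :=
      tendsto_id.mono_left nhdsWithin_le_nhds
    have hof : Tendsto (fun a : ℝ => ENNReal.ofReal a) (𝓝[>] (0:ℝ)) (𝓝 0) := by
      simpa using ENNReal.tendsto_ofReal hida
    exact tendsto_of_tendsto_of_tendsto_of_le_of_le tendsto_const_nhds hof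
      (fun a => zero_le) hle
  have htail : Tendsto (fun a => ∫ x in Ioc 0 a, φ x) (𝓝[>] (0:ℝ)) (𝓝 0) := by
    apply htail0.congr'
    filter_upwards [Ioo_mem_nhdsGT_of_mem (⟨le_refl 0, hR⟩ : (0:ℝ) ∈ Ico 0 R)] with a ha
    rw [Measure.restrict_restrict measurableSet_Ioc]
    congr 1
    rw [Set.inter_eq_self_of_subset_left (show Ioc 0 a ⊆ Ioo 0 R from fun x hx => ⟨hx.1, lt_of_le_of_lt hx.2 ha.2⟩)]
  -- FTC identity on (0, b]
  have hftc : ∀ a ∈ Ioc (0:ℝ) b,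
      (θ a - c) ^ 2 = (θ b - c) ^ 2 - (∫ x in Ioc 0 b, φ x) + ∫ x in Ioc 0 a, φ x := by
    intro a ha
    have hsub : Icc a b ⊆ Ioo 0 R := fun x hx =>
      ⟨lt_of_lt_of_le ha.1 hx.1, lt_of_le_of_lt hx.2 hbR⟩
    have hderivg : ∀ x ∈ uIcc a b, HasDerivAt (fun r => (θ r - c) ^ 2) (φ x) x := by
      intro x hx
      rw [uIcc_of_le ha.2] at hx
      have hθx : HasDerivAt θ (deriv θ x) x := (hdiff x (hsub hx)).hasDerivAt
      have hd := (hθx.sub_const c).pow 2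
      exact hd.congr_deriv (by simp [hφ])
    have hIocsub : Ioc a b ⊆ Ioo 0 R := fun x hx =>
      ⟨lt_trans ha.1 hx.1, lt_of_le_of_lt hx.2 hbR⟩
    have hφi : IntervalIntegrable φ volume a b := by
      rw [intervalIntegrable_iff_integrableOn_Ioc_of_le ha.2]
      exact hφint.mono_set hIocsub
    have hF := intervalIntegral.integral_eq_sub_of_hasDerivAt hderivg hφi
    rw [intervalIntegral.integral_of_le ha.2] at hF
    have int1 : IntegrableOn φ (Ioc 0 a) :=
      hφint.mono_set (fun x hx => ⟨hx.1, lt_of_le_of_lt (hx.2.trans ha.2) hbR⟩)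
    have int2 : IntegrableOn φ (Ioc a b) := hφint.mono_set hIocsub
    have hsplit : ∫ x in Ioc 0 b, φ x = (∫ x in Ioc 0 a, φ x) + ∫ x in Ioc a b, φ x := by
      rw [← setIntegral_union (Ioc_disjoint_Ioc_of_le le_rfl) measurableSet_Ioc int1 int2,
        Set.Ioc_union_Ioc_eq_Ioc ha.1.le ha.2]
    linarith [hF, hsplit]
  -- the limit of (θ a - c)^2
  set L : ℝ := (θ b - c) ^ 2 - ∫ x in Ioc 0 b, φ x with hLdef
  have hgL : Tendsto (fun a => (θ a - c) ^ 2) (𝓝[>] (0:ℝ)) (𝓝 L) := by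
    have h' : Tendsto (fun a => (θ b - c) ^ 2 - (∫ x in Ioc 0 b, φ x) + ∫ x in Ioc 0 a, φ x)
        (𝓝[>] (0:ℝ)) (𝓝 L) := by
      simpa using tendsto_const_nhds.add htail
    apply h'.congr'
    filter_upwards [Ioc_mem_nhdsGT_of_mem (⟨le_refl 0, hb0⟩ : (0:ℝ) ∈ Ico 0 b)] with a ha
    exact (hftc a ha).symm
  -- L = 0
  have hL0 : 0 ≤ L :=
    ge_of_tendsto hgL (Eventually.of_forall fun a => sq_nonneg _)
  have hLle : L ≤ 0 := by
    by_contra hL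
    push_neg at hL
    have hev : ∀ᶠ a in 𝓝[>] (0:ℝ), L / 2 < (θ a - c) ^ 2 :=
      hgL.eventually (eventually_gt_nhds (by linarith))
    obtain ⟨δ, hδ, hδsub⟩ := mem_nhdsGT_iff_exists_Ioc_subset.1 hev
    have hδ0 : 0 < δ := hδ
    set δ' : ℝ := min δ R with hδ'def
    have hδ'0 : 0 < δ' := lt_min hδ0 hR
    have hint1 : IntegrableOn (fun r => (θ r - c) ^ 2 / r) (Ioo 0 δ') :=
      h3.mono_set (Ioo_subset_Ioo le_rfl (min_le_right _ _))
    have hint2 : IntegrableOn (fun r => (L / 2) * r⁻¹) (Ioo 0 δ') := by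
      apply hint1.mono' ((measurable_const.mul measurable_inv).aestronglyMeasurable)
      filter_upwards [ae_restrict_mem measurableSet_Ioo] with x hx
      have hx0 : 0 < x := hx.1
      have hxδ : x ∈ Ioc 0 δ := ⟨hx0, le_of_lt (lt_of_lt_of_le hx.2 (min_le_left _ _))⟩
      have hgx : L / 2 ≤ (θ x - c) ^ 2 := (hδsub hxδ).le
      have hL2 : (0:ℝ) < L / 2 := by linarith
      show ‖L / 2 * x⁻¹‖ ≤ _
      rw [norm_mul, Real.norm_eq_abs, Real.norm_eq_abs, abs_of_pos hL2,
        abs_inv, abs_of_pos hx0]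
      rw [div_eq_mul_inv]
      exact mul_le_mul_of_nonneg_right hgx (inv_nonneg.2 hx0.le)
    have hinv : IntegrableOn (fun r : ℝ => r⁻¹) (Ioo 0 δ') := by
      have h' := hint2.const_mul (L / 2)⁻¹
      have hL2 : (L / 2) ≠ 0 := by positivity
      refine h'.congr (Eventually.of_forall fun x => ?_)
      show (L / 2)⁻¹ * (L / 2 * x⁻¹) = x⁻¹
      rw [← mul_assoc, inv_mul_cancel₀ hL2, one_mul]
    have hII : IntervalIntegrable (fun x : ℝ => x⁻¹) volume 0 δ' :=
      (intervalIntegrable_iff_integrableOn_Ioo_of_le hδ'0.le).2 hinv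
    rw [intervalIntegrable_inv_iff] at hII
    rcases hII with h | h
    · exact hδ'0.ne' h.symm
    · exact h (left_mem_uIcc)
  have hLzero : L = 0 := le_antisymm hLle hL0
  rw [hLzero] at hgL
  -- θ tends to c
  have habs : Tendsto (fun a => |θ a - c|) (𝓝[>] (0:ℝ)) (𝓝 0) := by
    have hsq : Tendsto (fun a => Real.sqrt ((θ a - c) ^ 2)) (𝓝[>] (0:ℝ)) (𝓝 0) := by
      have := (Real.continuous_sqrt.tendsto 0).comp hgL
      simpa [Function.comp_def] using this
    exact hsq.congr fun a => Real.sqrt_sq_eq_abs _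
  have hθtend : Tendsto θ (𝓝[>] (0:ℝ)) (𝓝 c) := by
    have hf0 : Tendsto (fun a => θ a - c) (𝓝[>] (0:ℝ)) (𝓝 0) :=
      tendsto_of_tendsto_of_tendsto_of_le_of_le (by simpa using habs.neg) habs
        (fun a => neg_abs_le _) (fun a => le_abs_self _)
    have := hf0.add (tendsto_const_nhds (x := c))
    simpa using this
  set Θ : ℝ → ℝ := fun r => if r ≤ 0 then c else θ r with hΘdef
  have hΘ0 : Θ 0 = c := if_pos le_rfl
  have hΘeq : ∀ y : ℝ, 0 < y → Θ y = θ y := fun y hy => if_neg (not_le.2 hy)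
  refine ⟨hθtend, Θ, ?_, hΘ0, ?_⟩
  · -- continuity of the extension
    intro x hx
    rcases eq_or_lt_of_le hx.1 with h0 | hx0
    · -- x = 0
      have hx0' : x = 0 := h0.symm
      subst hx0'
      show Tendsto Θ (𝓝[Icc 0 R] 0) (𝓝 (Θ 0))
      rw [hΘ0]
      apply Tendsto.mono_left _ (nhdsWithin_mono 0 Icc_subset_Ici_self)
      have hIci : Ici (0:ℝ) = {0} ∪ Ioi 0 := by
        ext y
        simp only [mem_Ici, mem_union, mem_singleton_iff, mem_Ioi]
        constructor
        · intro h
          rcases eq_or_lt_of_le h with h' | h'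
          · exact Or.inl h'.symm
          · exact Or.inr h'
        · rintro (h | h)
          · exact h.ge
          · exact h.le
      rw [hIci, nhdsWithin_union, nhdsWithin_singleton, tendsto_sup]
      constructor
      · have h := tendsto_pure_nhds Θ 0
        rwa [hΘ0] at h
      · apply hθtend.congr'
        filter_upwards [eventually_mem_nhdsWithin] with y hy
        exact (hΘeq y hy).symm
    · -- 0 < x
      have hxIoc : x ∈ Ioc 0 R := ⟨hx0, hx.2⟩
      have h1 : ContinuousWithinAt θ (Ioc 0 R) x := hcont x hxIoc
      have h2 : ContinuousWithinAt Θ (Ioc 0 R) x :=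
        h1.congr (fun y hy => hΘeq y hy.1) (hΘeq x hx0)
      apply h2.mono_of_mem_nhdsWithin
      have hIoi : Ioi (0:ℝ) ∈ 𝓝[Icc 0 R] x :=
        mem_nhdsWithin_of_mem_nhds (Ioi_mem_nhds hx0)
      have hmem := inter_mem self_mem_nhdsWithin hIoi
      apply mem_of_superset hmem
      intro y hy
      exact ⟨hy.2, hy.1.2⟩
  · intro r hr
    exact hΘeq r hr.1
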